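/- In ℂ[x,y], set p = x − y − x²y − x²y² and q = x − (x + y + xy)²·y. Then: (a) the quotient algebras ℂ[x,y]/⟨p⟩ and ℂ[x,y]/⟨q⟩ are isomorphic as ℂ-algebras; (b) the set of points of ℂ² at which both partial derivatives of p vanish has exactly 4 elements; (c) the set of points of ℂ² at which both partial derivatives of q vanish has exactly 3 elements; and consequently (d) there is no ℂ-algebra automorphism σ of ℂ[x,y] such that σ(⟨p⟩) = ⟨q⟩. -/

import Mathlib

open MvPolynomial

local notation "PX" => Polynomial.X
local notation "PC" => Polynomial.C

/-! ### Auxiliary lemmas -/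

private lemma eval_aeval' (a : Fin 2 → ℂ) (g : Fin 2 → MvPolynomial (Fin 2) ℂ)
    (f : MvPolynomial (Fin 2) ℂ) :
    eval a (aeval g f) = eval (fun i => eval a (g i)) f := by
  induction f using MvPolynomial.induction_on with
  | C c => simp
  | add f1 f2 h1 h2 => simp only [map_add, h1, h2]
  | mul_X f n ih => simp only [map_mul, aeval_X, eval_mul, eval_X, ih]

private lemma pderiv_aeval' (g : Fin 2 → MvPolynomial (Fin 2) ℂ)
    (f : MvPolynomial (Fin 2) ℂ) (i : Fin 2) :
    pderiv i (aeval g f) = ∑ j, aeval g (pderiv j f) * pderiv i (g j) := by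
  induction f using MvPolynomial.induction_on with
  | C c => simp
  | add f1 f2 h1 h2 =>
      simp only [map_add, h1, h2, add_mul, ← Finset.sum_add_distrib]
  | mul_X f n ih =>
      simp only [map_mul, aeval_X, pderiv_mul, ih, Finset.sum_mul, map_add, add_mul, pderiv_X]
      rw [Finset.sum_add_distrib]
      refine congrArg₂ (· + ·) ?_ ?_
      · apply Finset.sum_congr rfl; intro j _; ring
      · rw [Finset.sum_eq_single n]
        · simp
        · intro j _ hj
          simp [Pi.single_apply, hj.symm]
        · simp

private lemma eval_algHom' (τ : MvPolynomial (Fin 2) ℂ →ₐ[ℂ] MvPolynomial (Fin 2) ℂ)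
    (a : Fin 2 → ℂ) (f : MvPolynomial (Fin 2) ℂ) :
    eval a (τ f) = eval (fun i => eval a (τ (X i))) f := by
  have hτ : τ f = aeval (fun i => τ (X i)) f :=
    DFunLike.congr_fun (MvPolynomial.algHom_ext (fun i => by simp) :
      τ = aeval (fun i => τ (X i))) f
  rw [hτ, eval_aeval']

/-- one-directional gradient-zero transfer along an algebra hom -/
private lemma grad_transfer (τ : MvPolynomial (Fin 2) ℂ →ₐ[ℂ] MvPolynomial (Fin 2) ℂ)
    (r : MvPolynomial (Fin 2) ℂ) (a : Fin 2 → ℂ)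
    (h : ∀ i, eval (fun i => eval a (τ (X i))) (pderiv i r) = 0) :
    ∀ i, eval a (pderiv i (τ r)) = 0 := by
  intro i
  have hτ : τ r = aeval (fun i => τ (X i)) r :=
    DFunLike.congr_fun (MvPolynomial.algHom_ext (fun i => by simp) :
      τ = aeval (fun i => τ (X i))) r
  rw [hτ, pderiv_aeval', map_sum]
  apply Finset.sum_eq_zero
  intro j _
  rw [eval_mul, eval_aeval', h j, zero_mul]

private lemma eval_algEquiv (σ : MvPolynomial (Fin 2) ℂ ≃ₐ[ℂ] MvPolynomial (Fin 2) ℂ)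
    (a : Fin 2 → ℂ) (f : MvPolynomial (Fin 2) ℂ) :
    eval a (σ f) = eval (fun i => eval a (σ (X i))) f := by
  have h := eval_algHom' (σ : MvPolynomial (Fin 2) ℂ →ₐ[ℂ] MvPolynomial (Fin 2) ℂ) a f
  simpa using h

private lemma grad_transfer_equiv (σ : MvPolynomial (Fin 2) ℂ ≃ₐ[ℂ] MvPolynomial (Fin 2) ℂ)
    (r : MvPolynomial (Fin 2) ℂ) (a : Fin 2 → ℂ)
    (h : ∀ i, eval (fun i => eval a (σ (X i))) (pderiv i r) = 0) :
    ∀ i, eval a (pderiv i (σ r)) = 0 := by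
  have h2 := grad_transfer (σ : MvPolynomial (Fin 2) ℂ →ₐ[ℂ] MvPolynomial (Fin 2) ℂ) r a
    (by simpa using h)
  simpa using h2

private lemma grad_ncard_eq (σ : MvPolynomial (Fin 2) ℂ ≃ₐ[ℂ] MvPolynomial (Fin 2) ℂ)
    (r : MvPolynomial (Fin 2) ℂ) :
    {a : Fin 2 → ℂ | ∀ i, eval a (pderiv i (σ r)) = 0}.ncard
      = {a : Fin 2 → ℂ | ∀ i, eval a (pderiv i r) = 0}.ncard := by
  set ψ : (Fin 2 → ℂ) → (Fin 2 → ℂ) := fun a i => eval a (σ (X i)) with hψ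
  set ψ' : (Fin 2 → ℂ) → (Fin 2 → ℂ) := fun a i => eval a (σ.symm (X i)) with hψ'
  have hψψ' : ∀ a, ψ' (ψ a) = a := by
    intro a; funext i
    show eval (ψ a) (σ.symm (X i)) = a i
    rw [hψ]
    rw [← eval_algEquiv σ a (σ.symm (X i))]
    simp
  have hψ'ψ : ∀ a, ψ (ψ' a) = a := by
    intro a; funext i
    show eval (ψ' a) (σ (X i)) = a i
    rw [hψ']
    rw [← eval_algEquiv σ.symm a (σ (X i))]
    simp
  have hmem : ∀ a : Fin 2 → ℂ,
      (∀ i, eval a (pderiv i (σ r)) = 0) ↔ (∀ i, eval (ψ a) (pderiv i r) = 0) := by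
    intro a
    constructor
    · intro h
      have h2 := grad_transfer_equiv σ.symm (σ r) (ψ a) (by
        intro i
        have he : (fun j => eval (ψ a) (σ.symm (X j))) = a := hψψ' a
        rw [he]; exact h i)
      intro i
      have := h2 i
      rwa [AlgEquiv.symm_apply_apply] at this
    · intro h
      exact grad_transfer_equiv σ r a h
  have hset : {a : Fin 2 → ℂ | ∀ i, eval a (pderiv i (σ r)) = 0}
      = ψ' '' {a : Fin 2 → ℂ | ∀ i, eval a (pderiv i r) = 0} := by
    ext a
    simp only [Set.mem_setOf_eq, Set.mem_image, hmem]
    constructor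
    · intro h
      exact ⟨ψ a, h, hψψ' a⟩
    · rintro ⟨b, hb, rfl⟩
      rw [hψ'ψ b]; exact hb
  rw [hset]
  exact Set.ncard_image_of_injective _ (Function.LeftInverse.injective hψ'ψ)

private lemma isUnit_eq_C {u : MvPolynomial (Fin 2) ℂ} (hu : IsUnit u) : ∃ c : ℂ, u = C c := by
  obtain ⟨r, hr, hru⟩ := Polynomial.isUnit_iff.mp (hu.map (finSuccEquiv ℂ 1))
  obtain ⟨r', hr', hr'r⟩ := Polynomial.isUnit_iff.mp (hr.map (finSuccEquiv ℂ 0))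
  refine ⟨r'.coeff 0, ?_⟩
  have h1 : r' = C (r'.coeff 0) := eq_C_of_isEmpty r'
  have h2 : r = C (r'.coeff 0) := by
    have := RingHom.congr_fun (finSuccEquiv_comp_C_eq_C (R := ℂ) 0) (r'.coeff 0)
    simp only [RingHom.comp_apply] at this
    have hr2 : (finSuccEquiv ℂ 0).symm (PC (C (r'.coeff 0))) = C (r'.coeff 0) := this
    rw [← h1] at hr2
    rw [hr'r] at hr2
    simpa using hr2
  have := RingHom.congr_fun (finSuccEquiv_comp_C_eq_C (R := ℂ) 1) (r'.coeff 0)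
  simp only [RingHom.comp_apply] at this
  have hu2 : (finSuccEquiv ℂ 1).symm (PC (C (r'.coeff 0))) = C (r'.coeff 0) := this
  rw [← h2] at hu2
  rw [hru] at hu2
  simpa using hu2

/-! the two univariate polynomials controlling the critical points -/

private noncomputable def fb : Polynomial ℂ := 4*PX^4 + 8*PX^3 + 4*PX^2 + 2*PX + 1

private noncomputable def gb : Polynomial ℂ := 4*PX^3 + 4*PX^2 + 3*PX + 1

private lemma fb_ne : fb ≠ 0 := by
  intro h
  have h1 : fb.eval 0 = 1 := by simp [fb]
  rw [h] at h1; simp at h1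

private lemma gb_ne : gb ≠ 0 := by
  intro h
  have h1 : gb.eval 0 = 1 := by simp [gb]
  rw [h] at h1; simp at h1

private lemma fb_deg : fb.natDegree = 4 := by unfold fb; compute_degree!

private lemma gb_deg : gb.natDegree = 3 := by unfold gb; compute_degree!

private lemma fb_deriv : Polynomial.derivative fb = 16*PX^3 + 24*PX^2 + 8*PX + 2 := by
  unfold fb
  simp [Polynomial.derivative_pow, map_ofNat]
  ring

private lemma gb_deriv : Polynomial.derivative gb = 12*PX^2 + 8*PX + 3 := by
  unfold gb
  simp [Polynomial.derivative_pow, map_ofNat]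
  ring

private lemma fb_sep : fb.Separable := by
  refine ⟨PC (86⁻¹:ℂ) * (56 - 224*PX - 288*PX^2),
    PC (86⁻¹:ℂ) * (15 - 4*PX + 92*PX^2 + 72*PX^3), ?_⟩
  rw [fb_deriv]
  have key : (56 - 224*PX - 288*PX^2) * fb
      + (15 - 4*PX + 92*PX^2 + 72*PX^3) * (16*PX^3 + 24*PX^2 + 8*PX + 2)
      = (86 : Polynomial ℂ) := by
    unfold fb; ring
  have h86 : (86 : Polynomial ℂ) = PC (86 : ℂ) := (map_ofNat PC 86).symm
  calc PC (86⁻¹:ℂ) * (56 - 224*PX - 288*PX^2) * fb +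
      PC (86⁻¹:ℂ) * (15 - 4*PX + 92*PX^2 + 72*PX^3) * (16*PX^3 + 24*PX^2 + 8*PX + 2)
      = PC (86⁻¹:ℂ) * ((56 - 224*PX - 288*PX^2) * fb
        + (15 - 4*PX + 92*PX^2 + 72*PX^3) * (16*PX^3 + 24*PX^2 + 8*PX + 2)) := by ring
    _ = PC (86⁻¹:ℂ) * PC (86:ℂ) := by rw [key, h86]
    _ = 1 := by rw [← Polynomial.C_mul]; norm_num

private lemma gb_sep : gb.Separable := by
  refine ⟨PC (7⁻¹:ℂ) * (-2 - 30*PX), PC (7⁻¹:ℂ) * (3 + 4*PX + 10*PX^2), ?_⟩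
  rw [gb_deriv]
  have key : (-2 - 30*PX) * gb + (3 + 4*PX + 10*PX^2) * (12*PX^2 + 8*PX + 3)
      = (7 : Polynomial ℂ) := by
    unfold gb; ring
  have h7 : (7 : Polynomial ℂ) = PC (7 : ℂ) := (map_ofNat PC 7).symm
  calc PC (7⁻¹:ℂ) * (-2 - 30*PX) * gb +
      PC (7⁻¹:ℂ) * (3 + 4*PX + 10*PX^2) * (12*PX^2 + 8*PX + 3)
      = PC (7⁻¹:ℂ) * ((-2 - 30*PX) * gb + (3 + 4*PX + 10*PX^2) * (12*PX^2 + 8*PX + 3)) := by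
        ring
    _ = PC (7⁻¹:ℂ) * PC (7:ℂ) := by rw [key, h7]
    _ = 1 := by rw [← Polynomial.C_mul]; norm_num

private lemma fb_card : fb.roots.toFinset.card = 4 := by
  rw [Multiset.toFinset_card_of_nodup (Polynomial.nodup_roots fb_sep),
    IsAlgClosed.card_roots_eq_natDegree (p := fb), fb_deg]

private lemma gb_card : gb.roots.toFinset.card = 3 := by
  rw [Multiset.toFinset_card_of_nodup (Polynomial.nodup_roots gb_sep),
    IsAlgClosed.card_roots_eq_natDegree (p := gb), gb_deg]

/-- (b): the gradient zero set of `p` -/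
private lemma part_b (p : MvPolynomial (Fin 2) ℂ)
    (hp : p = X 0 - X 1 - X 0 ^ 2 * X 1 - X 0 ^ 2 * X 1 ^ 2) :
    {a : Fin 2 → ℂ | ∀ i, eval a (pderiv i p) = 0}.ncard = 4 := by
  have hset : {a : Fin 2 → ℂ | ∀ i, eval a (pderiv i p) = 0} =
      (fun y : ℂ => ![(2*y*(1+y))⁻¹, y]) '' (fb.roots.toFinset : Set ℂ) := by
    have hchar : ∀ a : Fin 2 → ℂ, (∀ i, eval a (pderiv i p) = 0) ↔
        (1 - 2*a 0*a 1 - 2*a 0*a 1^2 = 0 ∧ 1 + a 0^2 + 2*a 0^2*a 1 = 0) := by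
      intro a
      have e0 : eval a (pderiv 0 p) = 1 - 2*a 0*a 1 - 2*a 0*a 1^2 := by
        subst hp; simp [pderiv_mul, pderiv_pow]; ring
      have e1 : eval a (pderiv 1 p) = -(1 + a 0^2 + 2*a 0^2*a 1) := by
        subst hp; simp [pderiv_mul, pderiv_pow]; ring
      rw [Fin.forall_fin_two, e0, e1, neg_eq_zero]
    have hroot : ∀ y : ℂ, y ∈ (fb.roots.toFinset : Set ℂ) ↔
        4*y^4 + 8*y^3 + 4*y^2 + 2*y + 1 = 0 := by
      intro y
      rw [Finset.mem_coe, Multiset.mem_toFinset, Polynomial.mem_roots fb_ne]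
      simp [fb, Polynomial.IsRoot]
    ext a
    simp only [Set.mem_setOf_eq, hchar, Set.mem_image]
    constructor
    · rintro ⟨h1, h2⟩
      refine ⟨a 1, (hroot _).2 ?_, ?_⟩
      · linear_combination (1 + 2*a 1 + 2*a 0*a 1 + 6*a 0*a 1^2 + 4*a 0*a 1^3) * h1 +
          (4*a 1^2 + 8*a 1^3 + 4*a 1^4) * h2
      · have hx : (2*a 1*(1+a 1)) * a 0 = 1 := by linear_combination -h1
        funext i
        fin_cases i
        · simp [(inv_eq_of_mul_eq_one_right hx).symm]
        · simp
    · rintro ⟨y, hy, rfl⟩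
      rw [hroot] at hy
      have hy0 : y ≠ 0 := by rintro rfl; norm_num at hy
      have hy1 : (1:ℂ) + y ≠ 0 := by
        rintro h
        have : y = -1 := by linear_combination h
        rw [this] at hy; norm_num at hy
      refine ⟨?_, ?_⟩ <;>
        simp only [Matrix.cons_val_zero, Matrix.cons_val_one, Matrix.head_cons] <;>
        field_simp
      · ring
      · linear_combination hy
  rw [hset,
    Set.ncard_image_of_injective _ (fun y z h => by simpa using congrFun h 1),
    Set.ncard_coe_finset, fb_card]

/-- (c): the gradient zero set of `q` -/
private lemma part_c (q : MvPolynomial (Fin 2) ℂ)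
    (hq : q = X 0 - (X 0 + X 1 + X 0 * X 1) ^ 2 * X 1) :
    {a : Fin 2 → ℂ | ∀ i, eval a (pderiv i q) = 0}.ncard = 3 := by
  have hset : {a : Fin 2 → ℂ | ∀ i, eval a (pderiv i q) = 0} =
      (fun y : ℂ => ![-3*y*(1+3*y)⁻¹, y]) '' (gb.roots.toFinset : Set ℂ) := by
    have hchar : ∀ a : Fin 2 → ℂ, (∀ i, eval a (pderiv i q) = 0) ↔
        (1 - 2*(a 0 + a 1 + a 0*a 1)*(1 + a 1)*a 1 = 0 ∧
          2*(a 0 + a 1 + a 0*a 1)*(1 + a 0)*a 1 + (a 0 + a 1 + a 0*a 1)^2 = 0) := by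
      intro a
      have e0 : eval a (pderiv 0 q) = 1 - 2*(a 0 + a 1 + a 0*a 1)*(1 + a 1)*a 1 := by
        subst hq; simp [pderiv_mul, pderiv_pow]; ring
      have e1 : eval a (pderiv 1 q) =
          -(2*(a 0 + a 1 + a 0*a 1)*(1 + a 0)*a 1 + (a 0 + a 1 + a 0*a 1)^2) := by
        subst hq; simp [pderiv_mul, pderiv_pow]; ring
      rw [Fin.forall_fin_two, e0, e1, neg_eq_zero]
    have hroot : ∀ y : ℂ, y ∈ (gb.roots.toFinset : Set ℂ) ↔
        4*y^3 + 4*y^2 + 3*y + 1 = 0 := by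
      intro y
      rw [Finset.mem_coe, Multiset.mem_toFinset, Polynomial.mem_roots gb_ne]
      simp [gb, Polynomial.IsRoot]
    ext a
    simp only [Set.mem_setOf_eq, hchar, Set.mem_image]
    constructor
    · rintro ⟨h1, h2⟩
      have hs : a 0 + a 1 + a 0*a 1 ≠ 0 := by
        intro h
        have : (1:ℂ) = 0 := by linear_combination h1 + 2*a 1*(1+a 1)*h
        exact one_ne_zero this
      have hL : a 0 + 3*a 1 + 3*a 0*a 1 = 0 := by
        have hmul : (a 0 + a 1 + a 0*a 1) * (a 0 + 3*a 1 + 3*a 0*a 1) = 0 := by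
          linear_combination h2
        rcases mul_eq_zero.mp hmul with h | h
        · exact absurd h hs
        · exact h
      have h3 : (1:ℂ) + 3*a 1 ≠ 0 := by
        intro h
        have : (1:ℂ) = 0 := by linear_combination h - hL + a 0 * h
        exact one_ne_zero this
      refine ⟨a 1, (hroot _).2 ?_, ?_⟩
      · linear_combination (1 + 3*a 1)*h1 + (2*a 1 + 4*a 1^2 + 2*a 1^3)*hL
      · have hx : a 0 * ((1:ℂ) + 3*a 1) = -3*a 1 := by linear_combination hL
        funext i
        fin_cases i
        · simp only [Fin.zero_eta, Matrix.cons_val_zero]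
          field_simp
          linear_combination -hx
        · simp
    · rintro ⟨y, hy, rfl⟩
      rw [hroot] at hy
      have h3 : (1:ℂ) + 3*y ≠ 0 := by
        intro h
        have : y = -1/3 := by linear_combination h/3
        rw [this] at hy; norm_num at hy
      refine ⟨?_, ?_⟩ <;>
        simp only [Matrix.cons_val_zero, Matrix.cons_val_one, Matrix.head_cons] <;>
        field_simp
      · linear_combination hy
      · ring
  rw [hset,
    Set.ncard_image_of_injective _ (fun y z h => by simpa using congrFun h 1),
    Set.ncard_coe_finset, gb_card]

/-- (a): the coordinate rings are isomorphic -/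
private lemma part_a (p q : MvPolynomial (Fin 2) ℂ)
    (hp : p = X 0 - X 1 - X 0 ^ 2 * X 1 - X 0 ^ 2 * X 1 ^ 2)
    (hq : q = X 0 - (X 0 + X 1 + X 0 * X 1) ^ 2 * X 1) :
    Nonempty ((MvPolynomial (Fin 2) ℂ ⧸ Ideal.span {p}) ≃ₐ[ℂ]
      (MvPolynomial (Fin 2) ℂ ⧸ Ideal.span {q})) := by
  set F : MvPolynomial (Fin 2) ℂ →ₐ[ℂ] MvPolynomial (Fin 2) ℂ :=
    aeval ![X 0 + X 1 + X 0 * X 1, X 1] with hF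
  set G : MvPolynomial (Fin 2) ℂ →ₐ[ℂ] MvPolynomial (Fin 2) ℂ :=
    aeval ![X 0 ^ 2 * X 1, X 1] with hG
  have hFp : F p = (1 + X 1) * q := by
    subst hp hq
    simp only [hF, map_sub, map_add, map_mul, map_pow, aeval_X,
      Matrix.cons_val_zero, Matrix.cons_val_one, Matrix.head_cons]
    ring
  have hGq : G q = (X 1 * (X 0 + X 1 + X 0^2*X 1 + X 0^2*X 1^2)) * p := by
    subst hp hq
    simp only [hG, map_sub, map_add, map_mul, map_pow, aeval_X,
      Matrix.cons_val_zero, Matrix.cons_val_one, Matrix.head_cons]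
    ring
  have hqmem : q ∈ Ideal.span {q} := Ideal.subset_span (Set.mem_singleton q)
  have hpmem : p ∈ Ideal.span {p} := Ideal.subset_span (Set.mem_singleton p)
  have hFkey : ∀ a ∈ Ideal.span {p},
      ((Ideal.Quotient.mkₐ ℂ (Ideal.span {q})).comp F) a = 0 := by
    intro a ha
    rw [Ideal.mem_span_singleton'] at ha
    obtain ⟨c, rfl⟩ := ha
    simp only [AlgHom.comp_apply]
    have hc : F (c * p) = F c * ((1 + X 1) * q) := by rw [map_mul, hFp]
    rw [hc, Ideal.Quotient.mkₐ_eq_mk, Ideal.Quotient.eq_zero_iff_mem]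
    exact Ideal.mul_mem_left _ _ (Ideal.mul_mem_left _ _ hqmem)
  have hGkey : ∀ a ∈ Ideal.span {q},
      ((Ideal.Quotient.mkₐ ℂ (Ideal.span {p})).comp G) a = 0 := by
    intro a ha
    rw [Ideal.mem_span_singleton'] at ha
    obtain ⟨c, rfl⟩ := ha
    simp only [AlgHom.comp_apply]
    have hc : G (c * q) = G c * ((X 1 * (X 0 + X 1 + X 0^2*X 1 + X 0^2*X 1^2)) * p) := by
      rw [map_mul, hGq]
    rw [hc, Ideal.Quotient.mkₐ_eq_mk, Ideal.Quotient.eq_zero_iff_mem]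
    exact Ideal.mul_mem_left _ _ (Ideal.mul_mem_left _ _ hpmem)
  set Fbar := Ideal.Quotient.liftₐ (Ideal.span {p})
    ((Ideal.Quotient.mkₐ ℂ (Ideal.span {q})).comp F) hFkey with hFbar
  set Gbar := Ideal.Quotient.liftₐ (Ideal.span {q})
    ((Ideal.Quotient.mkₐ ℂ (Ideal.span {p})).comp G) hGkey with hGbar
  have hFbar_mk : ∀ a, Fbar (Ideal.Quotient.mk (Ideal.span {p}) a)
      = Ideal.Quotient.mk (Ideal.span {q}) (F a) := by
    intro a
    rw [hFbar]
    exact Ideal.Quotient.liftₐ_apply _ _ _ _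
  have hGbar_mk : ∀ a, Gbar (Ideal.Quotient.mk (Ideal.span {q}) a)
      = Ideal.Quotient.mk (Ideal.span {p}) (G a) := by
    intro a
    rw [hGbar]
    exact Ideal.Quotient.liftₐ_apply _ _ _ _
  have hFG : Fbar.comp Gbar = AlgHom.id ℂ (MvPolynomial (Fin 2) ℂ ⧸ Ideal.span {q}) := by
    refine Ideal.Quotient.algHom_ext ℂ (MvPolynomial.algHom_ext (Fin.forall_fin_two.mpr ⟨?_, ?_⟩))
    all_goals
      simp only [AlgHom.comp_apply, Ideal.Quotient.mkₐ_eq_mk, AlgHom.coe_id, id_eq]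
      rw [hGbar_mk, hFbar_mk]
      rw [Ideal.Quotient.mk_eq_mk_iff_sub_mem]
      rw [Ideal.mem_span_singleton']
    · refine ⟨-1, ?_⟩
      subst hq
      simp only [hF, hG, map_sub, map_add, map_mul, map_pow, aeval_X,
        Matrix.cons_val_zero, Matrix.cons_val_one, Matrix.head_cons]
      ring
    · refine ⟨0, ?_⟩
      simp only [hF, hG, aeval_X, Matrix.cons_val_one, Matrix.head_cons, Matrix.cons_val_zero]
      ring
  have hGF : Gbar.comp Fbar = AlgHom.id ℂ (MvPolynomial (Fin 2) ℂ ⧸ Ideal.span {p}) := by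
    refine Ideal.Quotient.algHom_ext ℂ (MvPolynomial.algHom_ext (Fin.forall_fin_two.mpr ⟨?_, ?_⟩))
    all_goals
      simp only [AlgHom.comp_apply, Ideal.Quotient.mkₐ_eq_mk, AlgHom.coe_id, id_eq]
      rw [hFbar_mk, hGbar_mk]
      rw [Ideal.Quotient.mk_eq_mk_iff_sub_mem]
      rw [Ideal.mem_span_singleton']
    · refine ⟨-1, ?_⟩
      subst hp
      simp only [hF, hG, map_sub, map_add, map_mul, map_pow, aeval_X,
        Matrix.cons_val_zero, Matrix.cons_val_one, Matrix.head_cons]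
      ring
    · refine ⟨0, ?_⟩
      simp only [hF, hG, aeval_X, Matrix.cons_val_one, Matrix.head_cons, Matrix.cons_val_zero]
      ring
  exact ⟨AlgEquiv.ofAlgHom Fbar Gbar hFG hGF⟩

/-- Example 3.4 of the paper: with `x = X 0`, `y = X 1` in `ℂ[x,y]`,
`p = x - y - x²y - x²y²` and `q = x - (x + y + xy)²·y`: (a) the quotient algebras are
isomorphic; (b) `grad p` has exactly 4 common zeros; (c) `grad q` has exactly 3 common
zeros; and (d) no `ℂ`-algebra automorphism of `ℂ[x,y]` maps `⟨p⟩` onto `⟨q⟩`. -/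
theorem example_3_4
    (p q : MvPolynomial (Fin 2) ℂ)
    (hp : p = X 0 - X 1 - X 0 ^ 2 * X 1 - X 0 ^ 2 * X 1 ^ 2)
    (hq : q = X 0 - (X 0 + X 1 + X 0 * X 1) ^ 2 * X 1) :
    Nonempty ((MvPolynomial (Fin 2) ℂ ⧸ Ideal.span {p}) ≃ₐ[ℂ]
      (MvPolynomial (Fin 2) ℂ ⧸ Ideal.span {q})) ∧
    {a : Fin 2 → ℂ | ∀ i, eval a (pderiv i p) = 0}.ncard = 4 ∧
    {a : Fin 2 → ℂ | ∀ i, eval a (pderiv i q) = 0}.ncard = 3 ∧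
    ¬ ∃ σ : MvPolynomial (Fin 2) ℂ ≃ₐ[ℂ] MvPolynomial (Fin 2) ℂ,
      Ideal.map σ (Ideal.span {p}) = Ideal.span {q} := by
  refine ⟨part_a p q hp hq, part_b p hp, part_c q hq, ?_⟩
  rintro ⟨σ, hσ⟩
  rw [Ideal.map_span, Set.image_singleton] at hσ
  have hassoc : Associated (σ p) q := Ideal.span_singleton_eq_span_singleton.mp hσ
  obtain ⟨u, hu⟩ := hassoc
  obtain ⟨c, hc⟩ := isUnit_eq_C u.isUnit
  have hc0 : c ≠ 0 := by
    intro h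
    have : IsUnit (0 : MvPolynomial (Fin 2) ℂ) := by
      rw [← C_0 (σ := Fin 2) (R := ℂ), ← h, ← hc]; exact u.isUnit
    exact not_isUnit_zero this
  have hZ : {a : Fin 2 → ℂ | ∀ i, eval a (pderiv i q) = 0}
      = {a : Fin 2 → ℂ | ∀ i, eval a (pderiv i (σ p)) = 0} := by
    ext a
    simp only [Set.mem_setOf_eq]
    have hqd : ∀ i, pderiv i q = C c * pderiv i (σ p) := by
      intro i
      rw [← hu, hc, pderiv_mul, pderiv_C, mul_zero, add_zero, mul_comm]
    constructor
    · intro h i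
      have := h i
      rw [hqd i, eval_mul, eval_C, mul_eq_zero] at this
      rcases this with h' | h'
      · exact absurd h' hc0
      · exact h'
    · intro h i
      rw [hqd i, eval_mul, h i, mul_zero]
  have h4 : {a : Fin 2 → ℂ | ∀ i, eval a (pderiv i (σ p)) = 0}.ncard = 4 := by
    rw [grad_ncard_eq σ p]; exact part_b p hp
  have h3 := part_c q hq
  rw [hZ, h4] at h3
  norm_num at h3
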